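/- Fix η₀ > 0 and an integer m ≥ 0. Then the toroidal Neumann constants satisfy the asymptotic limits lim_{n→∞} ρ_{n,m}/n = 1/2, lim_{n→∞} σ_{n,m}/n = −cosh η₀, and lim_{n→∞} τ_{n,m}/n = 1/2. -/

import Mathlib

open Real MeasureTheory intervalIntegral Filter Topology

/-- Associated Legendre function of the second kind of half-integer degree,
`Q_{n-1/2}^m(t)`, defined via its real integral representation (valid for `t > 1`). -/
noncomputable def Qh (n m : ℕ) (t : ℝ) : ℝ :=
  ((-1 : ℝ) ^ m / (2 : ℝ) ^ ((n : ℝ) + 1 / 2)) *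
    (Real.Gamma ((n : ℝ) + (m : ℝ) + 1 / 2) / Real.Gamma ((n : ℝ) + 1 / 2)) *
    (t ^ 2 - 1) ^ ((m : ℝ) / 2) *
    ∫ s in (-1 : ℝ)..1, (1 - s ^ 2) ^ ((n : ℝ) - 1 / 2) * (t - s) ^ (-((n : ℝ) + (m : ℝ) + 1 / 2))

/-- `q_{n,m} = Q_{n-1/2}^m(cosh η₀)`. -/
noncomputable def qh (η₀ : ℝ) (n m : ℕ) : ℝ := Qh n m (Real.cosh η₀)

/-- `Φ_n^{+1}(θ) = cos (n θ)`, `Φ_n^{-1}(θ) = sin (n θ)`. -/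
noncomputable def Phi (ν : ℤ) (n : ℤ) (θ : ℝ) : ℝ :=
  if ν = 1 then Real.cos ((n : ℝ) * θ) else Real.sin ((n : ℝ) * θ)

/-- A quadruple `(n, m, ν, μ)` is admissible. -/
def Admissible (n m : ℕ) (ν μ : ℤ) : Prop :=
  (ν = 1 ∨ ν = -1) ∧ (μ = 1 ∨ μ = -1) ∧ ¬(n = 0 ∧ ν = -1) ∧ ¬(m = 0 ∧ μ = -1)

/-- Toroidal Neumann constant `ρ_{n,m}(η₀)` (`n ≥ 1`). -/
noncomputable def rhoT (η₀ : ℝ) (n m : ℕ) : ℝ :=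
  if n = 1 then
    (1 / (2 * Real.sinh η₀)) *
      (Real.cosh η₀ + (2 * (m : ℝ) - 1) * qh η₀ 1 m / qh η₀ 0 m)
  else
    (1 / (4 * Real.sinh η₀)) *
      ((2 * (n : ℝ) - 1) * Real.cosh η₀ +
        (2 * ((m : ℝ) - (n : ℝ)) + 1) * qh η₀ n m / qh η₀ (n - 1) m)

/-- Toroidal Neumann constant `σ_{n,m}(η₀)`. -/
noncomputable def sigmaT (η₀ : ℝ) (n m : ℕ) : ℝ :=
  (-1 / (2 * Real.sinh η₀)) *
    ((2 * (n : ℝ) * Real.cosh η₀ ^ 2 + 1) +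
      (2 * ((m : ℝ) - (n : ℝ)) - 1) * Real.cosh η₀ * qh η₀ (n + 1) m / qh η₀ n m)

/-- Toroidal Neumann constant `τ_{n,m}(η₀)`. -/
noncomputable def tauT (η₀ : ℝ) (n m : ℕ) : ℝ :=
  (1 / (4 * Real.sinh η₀)) *
    ((2 * (n : ℝ) + 3) * Real.cosh η₀ +
      (2 * ((m : ℝ) - (n : ℝ)) - 3) * qh η₀ (n + 2) m / qh η₀ (n + 1) m)

/-- The normal derivative `N_{n,m}^{ν,μ}(θ,φ)` of the interior toroidal harmonic
`I_{n,m}^{ν,μ}` on the torus `η = η₀`. -/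
noncomputable def NDer (η₀ : ℝ) (n m : ℕ) (ν μ : ℤ) (θ φ : ℝ) : ℝ :=
  (Real.sqrt (Real.cosh η₀ - Real.cos θ) / (4 * Real.sinh η₀)) * Phi μ (m : ℤ) φ *
    (Phi ν ((n : ℤ) - 1) θ *
        ((1 + 2 * (n : ℝ)) * Real.cosh η₀ -
          (2 * ((n : ℝ) - (m : ℝ)) + 1) * qh η₀ (n + 1) m / qh η₀ n m) -
      2 * Phi ν (n : ℤ) θ *
        ((2 * (n : ℝ) * Real.cosh η₀ ^ 2 + 1) -
          (2 * ((n : ℝ) - (m : ℝ)) + 1) * Real.cosh η₀ * qh η₀ (n + 1) m / qh η₀ n m) +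
      Phi ν ((n : ℤ) + 1) θ *
        ((1 + 2 * (n : ℝ)) * Real.cosh η₀ -
          (2 * ((n : ℝ) - (m : ℝ)) + 1) * qh η₀ (n + 1) m / qh η₀ n m))

/-- Interior toroidal harmonic `I_{n,m}^{ν,μ}[η₀]` in toroidal coordinates. -/
noncomputable def Ih (η₀ : ℝ) (n m : ℕ) (ν μ : ℤ) (η θ φ : ℝ) : ℝ :=
  Real.sqrt (Real.cosh η - Real.cos θ) *
    (Qh n m (Real.cosh η) / Qh n m (Real.cosh η₀)) * Phi ν (n : ℤ) θ * Phi μ (m : ℤ) φ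


set_option maxHeartbeats 1000000
open Set

/-- integrand of the integral representation -/
noncomputable def Fh (t : ℝ) (m n : ℕ) (s : ℝ) : ℝ :=
  (1 - s ^ 2) ^ ((n : ℝ) - 1 / 2) * (t - s) ^ (-((n : ℝ) + (m : ℝ) + 1 / 2))

/-- the integral -/
noncomputable def Jn (t : ℝ) (m n : ℕ) : ℝ := ∫ s in (-1:ℝ)..1, Fh t m n s

lemma Fh_contOn {t : ℝ} (ht : 1 < t) (m : ℕ) {n : ℕ} (hn : 1 ≤ n) :
    ContinuousOn (Fh t m n) (Icc (-1) 1) := by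
  have h1 : Continuous fun s : ℝ => (1 - s ^ 2) ^ ((n : ℝ) - 1 / 2) := by
    apply (continuous_const.sub (continuous_pow 2)).rpow_const
    intro x; right
    have : (1:ℝ) ≤ n := by exact_mod_cast hn
    linarith
  have h2 : ContinuousOn (fun s : ℝ => (t - s) ^ (-((n : ℝ) + (m : ℝ) + 1 / 2)))
      (Icc (-1) 1) := by
    apply (continuousOn_const.sub continuousOn_id).rpow_const
    intro x hx; left
    have : x ≤ 1 := hx.2
    have : 0 < t - x := by linarith
    exact this.ne'
  exact h1.continuousOn.mul h2

lemma Fh_intble {t : ℝ} (ht : 1 < t) (m : ℕ) {n : ℕ} (hn : 1 ≤ n) :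
    IntervalIntegrable (Fh t m n) volume (-1) 1 := by
  apply ContinuousOn.intervalIntegrable
  rw [Set.uIcc_of_le (by norm_num : (-1:ℝ) ≤ 1)]
  exact Fh_contOn ht m hn

lemma Fh_nonneg {t : ℝ} (ht : 1 < t) (m n : ℕ) {s : ℝ} (hs : s ∈ Icc (-1:ℝ) 1) :
    0 ≤ Fh t m n s := by
  apply mul_nonneg (Real.rpow_nonneg (by nlinarith [hs.1, hs.2]) _)
    (Real.rpow_nonneg (by linarith [hs.2]) _)

lemma Fh_pos {t : ℝ} (ht : 1 < t) (m n : ℕ) {s : ℝ} (hs : s ∈ Ioo (-1:ℝ) 1) :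
    0 < Fh t m n s :=
  mul_pos (Real.rpow_pos_of_pos (by nlinarith [hs.1, hs.2]) _)
    (Real.rpow_pos_of_pos (by linarith [hs.2]) _)

lemma Fh_endpoint {t : ℝ} (m : ℕ) {n : ℕ} (hn : 1 ≤ n) {s : ℝ} (hs : s ^ 2 = 1) :
    Fh t m n s = 0 := by
  have h : (1 : ℝ) - s ^ 2 = 0 := by rw [hs]; ring
  have hne : (n : ℝ) - 1 / 2 ≠ 0 := by
    have : (1:ℝ) ≤ n := by exact_mod_cast hn
    intro h'; simp at h'; linarith
  rw [Fh, h, Real.zero_rpow hne, zero_mul]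

lemma Fh_rec {t : ℝ} (ht : 1 < t) (m n : ℕ) {s : ℝ} (hs : s ∈ Ioo (-1:ℝ) 1) :
    Fh t m (n + 1) s = ((1 - s ^ 2) / (t - s)) * Fh t m n s := by
  have h1 : (0:ℝ) < 1 - s ^ 2 := by nlinarith [hs.1, hs.2]
  have h2 : (0:ℝ) < t - s := by linarith [hs.2]
  have e1 : ((n + 1 : ℕ) : ℝ) - 1 / 2 = ((n : ℝ) - 1 / 2) + 1 := by push_cast; ring
  have e2 : -(((n + 1 : ℕ) : ℝ) + (m : ℝ) + 1 / 2)
      = (-((n : ℝ) + (m : ℝ) + 1 / 2)) + (-1) := by push_cast; ring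
  rw [Fh, Fh, e1, e2, Real.rpow_add h1, Real.rpow_one, Real.rpow_add h2,
    Real.rpow_neg_one]
  field_simp

lemma Fh_pow {t : ℝ} (ht : 1 < t) (m : ℕ) (k : ℕ) {s : ℝ} (hs : s ∈ Ioo (-1:ℝ) 1) :
    Fh t m (k + 1) s = ((1 - s ^ 2) / (t - s)) ^ k * Fh t m 1 s := by
  induction k with
  | zero => simp
  | succ k ih =>
    rw [Fh_rec ht m (k+1) hs, ih, pow_succ]
    ring

section
variable {t a : ℝ} (ha0 : 0 < a) (ha1 : a < 1) (hat : 2 * a * t = 1 + a ^ 2)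

include ha0 ha1 hat

lemma ht_of : 1 < t := by
  have h : (0:ℝ) < (1 - a) ^ 2 := pow_pos (by linarith) 2
  nlinarith

lemma g_le (s : ℝ) (hs : s ∈ Icc (-1:ℝ) 1) : (1 - s ^ 2) / (t - s) ≤ 2 * a := by
  have ht : 1 < t := ht_of ha0 ha1 hat
  have h2 : (0:ℝ) < t - s := by linarith [hs.2]
  rw [div_le_iff₀ h2]
  nlinarith [sq_nonneg (s - a)]

lemma g_nonneg (s : ℝ) (hs : s ∈ Icc (-1:ℝ) 1) : 0 ≤ (1 - s ^ 2) / (t - s) := by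
  have ht : 1 < t := ht_of ha0 ha1 hat
  apply div_nonneg (by nlinarith [hs.1, hs.2]) (by linarith [hs.2])

end

lemma icc_cases {s : ℝ} (hs : s ∈ Icc (-1:ℝ) 1) : s ∈ Ioo (-1:ℝ) 1 ∨ s ^ 2 = 1 := by
  rcases eq_or_lt_of_le hs.1 with h | h
  · right; rw [← h]; norm_num
  rcases eq_or_lt_of_le hs.2 with h' | h'
  · right; rw [h']; norm_num
  · left; exact ⟨h, h'⟩

lemma Jn_pos {t : ℝ} (ht : 1 < t) (m : ℕ) {n : ℕ} (hn : 1 ≤ n) : 0 < Jn t m n :=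
  intervalIntegral_pos_of_pos_on (Fh_intble ht m hn)
    (fun s hs => Fh_pos ht m n hs) (by norm_num)

theorem Jn_ratio_tendsto {t a : ℝ} (ha0 : 0 < a) (ha1 : a < 1)
    (hat : 2 * a * t = 1 + a ^ 2) (m : ℕ) :
    Tendsto (fun k : ℕ => Jn t m (k + 2) / Jn t m (k + 1)) atTop (nhds (2 * a)) := by
  have ht : 1 < t := ht_of ha0 ha1 hat
  -- upper bound
  have hub : ∀ k : ℕ, Jn t m (k + 2) / Jn t m (k + 1) ≤ 2 * a := by
    intro k
    rw [div_le_iff₀ (Jn_pos ht m (by omega))]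
    have hmono : ∀ s ∈ Icc (-1:ℝ) 1, Fh t m (k + 2) s ≤ 2 * a * Fh t m (k + 1) s := by
      intro s hs
      rcases icc_cases hs with h | h
      · rw [show k + 2 = (k+1) + 1 by ring, Fh_rec ht m (k+1) h]
        exact mul_le_mul_of_nonneg_right (g_le ha0 ha1 hat s hs)
          (Fh_pos ht m (k+1) h).le
      · rw [Fh_endpoint m (by omega) h, Fh_endpoint m (by omega) h]; simp
    calc Jn t m (k + 2) ≤ ∫ s in (-1:ℝ)..1, 2 * a * Fh t m (k + 1) s :=
          intervalIntegral.integral_mono_on (by norm_num) (Fh_intble ht m (by omega))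
            ((Fh_intble ht m (by omega)).const_mul _) hmono
      _ = 2 * a * Jn t m (k + 1) := intervalIntegral.integral_const_mul _ _
  -- lower bound, quantitative
  have hlb : ∀ ε : ℝ, 0 < ε → ε < 2 * a →
      ∀ᶠ k : ℕ in atTop, 2 * a - 2 * ε ≤ Jn t m (k + 2) / Jn t m (k + 1) := by
    intro ε hε0 hεM
    set δ : ℝ := min (min (a/2) ((1-a)/2)) (Real.sqrt (ε/2*(t-1))) with hδdef
    have hδ0 : 0 < δ := by
      apply lt_min (lt_min (by linarith) (by linarith))
      exact Real.sqrt_pos.mpr (by nlinarith)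
    have hδa : δ ≤ a/2 := le_trans (min_le_left _ _) (min_le_left _ _)
    have hδ1 : δ ≤ (1-a)/2 := le_trans (min_le_left _ _) (min_le_right _ _)
    have hδq : δ^2 ≤ ε/2*(t-1) := by
      have h1 : δ ≤ Real.sqrt (ε/2*(t-1)) := min_le_right _ _
      have h2 : δ^2 ≤ Real.sqrt (ε/2*(t-1))^2 := by
        apply pow_le_pow_left₀ hδ0.le h1
      rwa [Real.sq_sqrt (by nlinarith)] at h2
    set l : ℝ := a - δ with hl
    set u : ℝ := a + δ with hu
    have hl1 : (-1:ℝ) < l := by simp only [hl]; linarith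
    have hu1 : u < 1 := by simp only [hu]; linarith
    have hlu : l < u := by simp only [hl,hu]; linarith
    have hIccsub : Icc l u ⊆ Icc (-1:ℝ) 1 :=
      Icc_subset_Icc (by linarith) (by linarith)
    have hIoosub : Icc l u ⊆ Ioo (-1:ℝ) 1 := fun x hx => ⟨by linarith [hx.1], by linarith [hx.2]⟩
    -- g lower bound on J
    have hgJ : ∀ s ∈ Icc l u, 2 * a - ε/2 ≤ (1 - s ^ 2) / (t - s) := by
      intro s hs
      have hts : (0:ℝ) < t - s := by have := hs.2; simp only [hu] at this; linarith
      rw [le_div_iff₀ hts]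
      have hsa : (s - a)^2 ≤ δ^2 := by
        have h1 := hs.1; have h2 := hs.2
        simp only [hl, hu] at h1 h2
        nlinarith
      have h3 : t - s ≥ t - 1 := by have := hs.2; simp only [hu] at this; linarith
      nlinarith
    -- F1 lower bound on J
    set c : ℝ := (1 - ((1+a)/2)^2) ^ ((1:ℝ)/2) * (t+1) ^ (-((1:ℝ) + (m:ℝ) + 1/2)) with hc
    have hβ : (0:ℝ) < 1 - ((1+a)/2)^2 := by nlinarith
    have hc0 : 0 < c := mul_pos (Real.rpow_pos_of_pos hβ _)
      (Real.rpow_pos_of_pos (by linarith) _)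
    have hF1J : ∀ s ∈ Icc l u, c ≤ Fh t m 1 s := by
      intro s hs
      have h1 := hs.1; have h2 := hs.2
      simp only [hl, hu] at h1 h2
      have hs2 : s^2 ≤ ((1+a)/2)^2 := by nlinarith
      have hb1 : (1 - ((1+a)/2)^2 : ℝ) ^ ((1:ℝ)/2) ≤ (1 - s^2) ^ ((1:ℝ)/2) :=
        Real.rpow_le_rpow hβ.le (by linarith) (by norm_num)
      have hb2 : (t+1 : ℝ) ^ (-((1:ℝ) + (m:ℝ) + 1/2)) ≤ (t - s) ^ (-((1:ℝ) + (m:ℝ) + 1/2)) := by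
        apply Real.rpow_le_rpow_of_nonpos (by linarith) (by linarith)
        have : (0:ℝ) ≤ (1:ℝ) + (m:ℝ) + 1/2 := by positivity
        linarith
      have : Fh t m 1 s = (1 - s^2) ^ ((1:ℝ)/2) * (t - s) ^ (-((1:ℝ) + (m:ℝ) + 1/2)) := by
        rw [Fh]; norm_num
      rw [this, hc]
      exact mul_le_mul hb1 hb2 (Real.rpow_nonneg (by linarith) _)
        (Real.rpow_nonneg (by nlinarith) _)
    -- lower bound on Jn (k+1)
    have hM2 : (0:ℝ) < 2*a - ε/2 := by linarith
    have hJlb : ∀ k : ℕ, (2*a - ε/2)^k * c * (2*δ) ≤ Jn t m (k + 1) := by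
      intro k
      have hint : IntervalIntegrable (Fh t m (k+1)) volume l u :=
        (Fh_intble ht m (by omega)).mono_set (by
          rw [Set.uIcc_of_le hlu.le, Set.uIcc_of_le (by norm_num : (-1:ℝ) ≤ 1)]
          exact hIccsub)
      have hmid : (2*a - ε/2)^k * c * (2*δ) ≤ ∫ s in l..u, Fh t m (k+1) s := by
        have hpt : ∀ s ∈ Icc l u, (2*a - ε/2)^k * c ≤ Fh t m (k+1) s := by
          intro s hs
          rw [Fh_pow ht m k (hIoosub hs)]
          have hg0 := g_nonneg ha0 ha1 hat s (hIccsub hs)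
          exact mul_le_mul (pow_le_pow_left₀ hM2.le (hgJ s hs) k) (hF1J s hs)
            hc0.le (pow_nonneg hg0 k)
        calc (2*a - ε/2)^k * c * (2*δ)
            = ∫ _ in l..u, (2*a - ε/2)^k * c := by
              rw [intervalIntegral.integral_const, smul_eq_mul]
              simp only [hl, hu]; ring
          _ ≤ ∫ s in l..u, Fh t m (k+1) s :=
              intervalIntegral.integral_mono_on hlu.le intervalIntegrable_const hint hpt
      -- split the integral
      have hi1 : IntervalIntegrable (Fh t m (k+1)) volume (-1) l :=
        (Fh_intble ht m (by omega)).mono_set (by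
          rw [Set.uIcc_of_le hl1.le, Set.uIcc_of_le (by norm_num : (-1:ℝ) ≤ 1)]
          exact Icc_subset_Icc le_rfl (by linarith))
      have hi3 : IntervalIntegrable (Fh t m (k+1)) volume u 1 :=
        (Fh_intble ht m (by omega)).mono_set (by
          rw [Set.uIcc_of_le hu1.le, Set.uIcc_of_le (by norm_num : (-1:ℝ) ≤ 1)]
          exact Icc_subset_Icc (by linarith) le_rfl)
      have hsplit : (∫ s in (-1:ℝ)..l, Fh t m (k+1) s) + (∫ s in l..u, Fh t m (k+1) s)
          + (∫ s in u..(1:ℝ), Fh t m (k+1) s) = Jn t m (k+1) := by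
        rw [Jn, intervalIntegral.integral_add_adjacent_intervals hi1 hint,
          intervalIntegral.integral_add_adjacent_intervals (hi1.trans hint) hi3]
      have hn1 : 0 ≤ ∫ s in (-1:ℝ)..l, Fh t m (k+1) s :=
        intervalIntegral.integral_nonneg hl1.le
          (fun s hs => Fh_nonneg ht m (k+1) ⟨hs.1, by linarith [hs.2]⟩)
      have hn3 : 0 ≤ ∫ s in u..(1:ℝ), Fh t m (k+1) s :=
        intervalIntegral.integral_nonneg hu1.le
          (fun s hs => Fh_nonneg ht m (k+1) ⟨by linarith [hs.1], hs.2⟩)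
      linarith
    -- key integral inequality
    have hkey : ∀ k : ℕ, (2*a - ε) * Jn t m (k+1) - (2*a*(2*a-ε)^k) * Jn t m 1
        ≤ Jn t m (k+2) := by
      intro k
      have hpt : ∀ s ∈ Icc (-1:ℝ) 1,
          (2*a - ε) * Fh t m (k+1) s - (2*a*(2*a-ε)^k) * Fh t m 1 s ≤ Fh t m (k+2) s := by
        intro s hs
        rcases icc_cases hs with h | h
        · have hgn := g_nonneg ha0 ha1 hat s hs
          have hF1 := (Fh_pos ht m 1 h).le
          have hFk1 := (Fh_pos ht m (k+1) h).le
          have hrec : Fh t m (k+2) s = ((1 - s ^ 2) / (t - s)) * Fh t m (k+1) s :=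
            Fh_rec ht m (k+1) h
          have hpow : Fh t m (k+1) s = ((1 - s ^ 2) / (t - s))^k * Fh t m 1 s :=
            Fh_pow ht m k h
          by_cases hcase : 2*a - ε ≤ (1 - s ^ 2) / (t - s)
          · have h1 : (2*a - ε) * Fh t m (k+1) s ≤ Fh t m (k+2) s := by
              rw [hrec]; exact mul_le_mul_of_nonneg_right hcase hFk1
            have h2 : 0 ≤ (2*a*(2*a-ε)^k) * Fh t m 1 s := by
              apply mul_nonneg (mul_nonneg (by linarith) (pow_nonneg (by linarith) k)) hF1
            linarith
          · push_neg at hcase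
            have h1 : Fh t m (k+1) s ≤ (2*a-ε)^k * Fh t m 1 s := by
              rw [hpow]
              exact mul_le_mul_of_nonneg_right (pow_le_pow_left₀ hgn hcase.le k) hF1
            have h2 : 0 ≤ Fh t m (k+2) s := Fh_nonneg ht m (k+2) hs
            have h3 : 0 ≤ (2*a-ε)^k * Fh t m 1 s :=
              mul_nonneg (pow_nonneg (by linarith) k) hF1
            nlinarith
        · rw [Fh_endpoint m (by omega) h, Fh_endpoint m (by omega) h,
            Fh_endpoint m (by omega) h]
          simp
      have hintL : IntervalIntegrable
          (fun s => (2*a - ε) * Fh t m (k+1) s - (2*a*(2*a-ε)^k) * Fh t m 1 s)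
          volume (-1) 1 :=
        ((Fh_intble ht m (by omega : 1 ≤ k+1)).const_mul _).sub
          ((Fh_intble ht m le_rfl).const_mul _)
      have := intervalIntegral.integral_mono_on (by norm_num : (-1:ℝ) ≤ 1) hintL
        (Fh_intble ht m (by omega : 1 ≤ k+2)) hpt
      rwa [intervalIntegral.integral_sub ((Fh_intble ht m (by omega : 1 ≤ k+1)).const_mul _)
        ((Fh_intble ht m le_rfl).const_mul _), intervalIntegral.integral_const_mul,
        intervalIntegral.integral_const_mul] at this
    -- put it together
    set C : ℝ := 2*a*Jn t m 1 / (c * (2*δ)) with hC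
    set ρ : ℝ := (2*a - ε) / (2*a - ε/2) with hρ
    have hρ0 : 0 ≤ ρ := div_nonneg (by linarith) (by linarith)
    have hρ1 : ρ < 1 := by
      rw [hρ, div_lt_one hM2]; linarith
    have hJ1 : 0 < Jn t m 1 := Jn_pos ht m le_rfl
    have hC0 : 0 ≤ C := by positivity
    have htend : Tendsto (fun k : ℕ => C * ρ^k) atTop (nhds 0) := by
      have := tendsto_pow_atTop_nhds_zero_of_lt_one hρ0 hρ1
      simpa using this.const_mul C
    have hev : ∀ᶠ k : ℕ in atTop, C * ρ^k < ε :=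
      htend.eventually_lt_const hε0
    filter_upwards [hev] with k hk
    have hJk1 : 0 < Jn t m (k+1) := Jn_pos ht m (by omega)
    have hPk : 0 < (2*a - ε/2)^k * c * (2*δ) := by positivity
    have hstep1 : (2*a - ε) - (2*a*(2*a-ε)^k) * Jn t m 1 / Jn t m (k+1)
        ≤ Jn t m (k+2) / Jn t m (k+1) := by
      calc (2*a - ε) - (2*a*(2*a-ε)^k) * Jn t m 1 / Jn t m (k+1)
          = ((2*a - ε) * Jn t m (k+1) - (2*a*(2*a-ε)^k) * Jn t m 1) / Jn t m (k+1) := by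
            field_simp
        _ ≤ Jn t m (k+2) / Jn t m (k+1) := by
            exact div_le_div_of_nonneg_right (hkey k) hJk1.le
    have hstep2 : (2*a*(2*a-ε)^k) * Jn t m 1 / Jn t m (k+1) ≤ C * ρ^k := by
      have hnum0 : 0 ≤ (2*a*(2*a-ε)^k) * Jn t m 1 :=
        mul_nonneg (mul_nonneg (by linarith) (pow_nonneg (by linarith) k)) hJ1.le
      calc (2*a*(2*a-ε)^k) * Jn t m 1 / Jn t m (k+1)
          ≤ (2*a*(2*a-ε)^k) * Jn t m 1 / ((2*a - ε/2)^k * c * (2*δ)) :=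
            div_le_div_of_nonneg_left hnum0 hPk (hJlb k)
        _ = C * ρ^k := by
            rw [hC, hρ, div_pow]
            field_simp
    linarith
  -- combine via metric characterization
  rw [Metric.tendsto_atTop]
  intro ε hε
  set ε' : ℝ := min (ε/4) a with hε'
  have hε'0 : 0 < ε' := lt_min (by linarith) ha0
  have hε'M : ε' < 2*a := lt_of_le_of_lt (min_le_right _ _) (by linarith)
  obtain ⟨N, hN⟩ := Filter.eventually_atTop.mp (hlb ε' hε'0 hε'M)
  refine ⟨N, fun k hk => ?_⟩
  have h1 := hN k hk
  have h2 := hub k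
  rw [Real.dist_eq, abs_lt]
  have hε'4 : ε' ≤ ε/4 := min_le_left _ _
  constructor <;> [linarith; linarith]

lemma Qh_eq_Jn (n m : ℕ) (t : ℝ) :
    Qh n m t = (((-1 : ℝ) ^ m / (2 : ℝ) ^ ((n : ℝ) + 1 / 2)) *
      (Real.Gamma ((n : ℝ) + (m : ℝ) + 1 / 2) / Real.Gamma ((n : ℝ) + 1 / 2)) *
      (t ^ 2 - 1) ^ ((m : ℝ) / 2)) * Jn t m n := rfl

lemma qh_ne_zero {η₀ : ℝ} (hη₀ : 0 < η₀) (m : ℕ) {n : ℕ} (hn : 1 ≤ n) :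
    qh η₀ n m ≠ 0 := by
  have ht : 1 < Real.cosh η₀ := Real.one_lt_cosh.mpr hη₀.ne'
  rw [qh, Qh_eq_Jn]
  apply mul_ne_zero
  apply mul_ne_zero
  apply mul_ne_zero
  · apply div_ne_zero (pow_ne_zero m (by norm_num)) (Real.rpow_pos_of_pos two_pos _).ne'
  · exact div_ne_zero (Real.Gamma_pos_of_pos (by positivity)).ne'
      (Real.Gamma_pos_of_pos (by positivity)).ne'
  · exact (Real.rpow_pos_of_pos (by nlinarith) _).ne'
  · exact (Jn_pos ht m hn).ne'

lemma qh_succ_div {η₀ : ℝ} (hη₀ : 0 < η₀) (m : ℕ) {n : ℕ} (hn : 1 ≤ n) :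
    qh η₀ (n+1) m / qh η₀ n m
      = (((n : ℝ) + (m : ℝ) + 1/2) / (2 * ((n : ℝ) + 1/2)))
        * (Jn (Real.cosh η₀) m (n+1) / Jn (Real.cosh η₀) m n) := by
  have ht : 1 < Real.cosh η₀ := Real.one_lt_cosh.mpr hη₀.ne'
  set t := Real.cosh η₀
  have hJ : (0:ℝ) < Jn t m n := Jn_pos ht m hn
  have hΓ1 : (0:ℝ) < Real.Gamma ((n : ℝ) + (m : ℝ) + 1/2) :=
    Real.Gamma_pos_of_pos (by positivity)
  have hΓ2 : (0:ℝ) < Real.Gamma ((n : ℝ) + 1/2) := Real.Gamma_pos_of_pos (by positivity)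
  have hP : (0:ℝ) < (2:ℝ) ^ ((n : ℝ) + 1/2) := Real.rpow_pos_of_pos two_pos _
  have hT : (0:ℝ) < (t ^ 2 - 1) ^ ((m : ℝ) / 2) := Real.rpow_pos_of_pos (by nlinarith) _
  have e1 : ((n+1 : ℕ) : ℝ) + (m : ℝ) + 1/2 = ((n : ℝ) + (m : ℝ) + 1/2) + 1 := by
    push_cast; ring
  have e2 : ((n+1 : ℕ) : ℝ) + 1/2 = ((n : ℝ) + 1/2) + 1 := by push_cast; ring
  have g1 : Real.Gamma (((n+1 : ℕ) : ℝ) + (m : ℝ) + 1/2)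
      = ((n : ℝ) + (m : ℝ) + 1/2) * Real.Gamma ((n : ℝ) + (m : ℝ) + 1/2) := by
    rw [e1, Real.Gamma_add_one (by positivity)]
  have g2 : Real.Gamma (((n+1 : ℕ) : ℝ) + 1/2)
      = ((n : ℝ) + 1/2) * Real.Gamma ((n : ℝ) + 1/2) := by
    rw [e2, Real.Gamma_add_one (by positivity)]
  have p1 : (2:ℝ) ^ (((n+1 : ℕ) : ℝ) + 1/2) = (2:ℝ) ^ ((n : ℝ) + 1/2) * 2 := by
    rw [e2, Real.rpow_add two_pos, Real.rpow_one]
  rw [qh, qh, Qh_eq_Jn, Qh_eq_Jn, g1, g2, p1]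
  have hm1 : ((-1:ℝ)) ^ m ≠ 0 := pow_ne_zero m (by norm_num)
  have hn2 : ((n:ℝ) + 1/2) ≠ 0 := by positivity
  field_simp
  have hA : (Real.cosh η₀ ^ 2 - 1) ^ ((m:ℝ) / 2) ≠ 0 := hT.ne'
  have hJ' : Jn (Real.cosh η₀) m n ≠ 0 := hJ.ne'
  change (Real.cosh η₀ ^ 2 - 1) ^ ((m:ℝ) / 2) * Jn (Real.cosh η₀) m (n + 1) *
      Jn (Real.cosh η₀) m n / ((Real.cosh η₀ ^ 2 - 1) ^ ((m:ℝ) / 2) * Jn (Real.cosh η₀) m n)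
      = Jn (Real.cosh η₀) m (n + 1)
  field_simp

lemma exp_rel {η₀ : ℝ} (hη₀ : 0 < η₀) :
    2 * Real.exp (-η₀) * Real.cosh η₀ = 1 + Real.exp (-η₀) ^ 2 := by
  rw [Real.cosh_eq, Real.exp_neg]
  have h := Real.exp_pos η₀
  field_simp

lemma coef_tendsto (m : ℕ) :
    Filter.Tendsto (fun n : ℕ => (((n : ℝ) + (m : ℝ) + 1/2) / (2 * ((n : ℝ) + 1/2))))
      Filter.atTop (nhds (1/2)) := by
  have hden : Filter.Tendsto (fun n : ℕ => 2 * ((n : ℝ) + 1/2)) Filter.atTop Filter.atTop := by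
    apply Filter.Tendsto.const_mul_atTop two_pos
    exact Filter.tendsto_atTop_add_const_right _ _ tendsto_natCast_atTop_atTop
  have h0 : Filter.Tendsto (fun n : ℕ => (m : ℝ) / (2 * ((n : ℝ) + 1/2)))
      Filter.atTop (nhds 0) := Filter.Tendsto.div_atTop tendsto_const_nhds hden
  have h1 : Filter.Tendsto (fun n : ℕ => 1/2 + (m : ℝ) / (2 * ((n : ℝ) + 1/2)))
      Filter.atTop (nhds (1/2)) := by simpa using h0.const_add (1/2 : ℝ)
  apply h1.congr
  intro n
  have : (2 : ℝ) * ((n : ℝ) + 1/2) ≠ 0 := by positivity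
  field_simp
  ring

lemma qh_ratio_tendsto {η₀ : ℝ} (hη₀ : 0 < η₀) (m : ℕ) :
    Filter.Tendsto (fun n : ℕ => qh η₀ (n+1) m / qh η₀ n m) Filter.atTop
      (nhds (Real.exp (-η₀))) := by
  have ha0 : 0 < Real.exp (-η₀) := Real.exp_pos _
  have ha1 : Real.exp (-η₀) < 1 := by
    rw [show (1:ℝ) = Real.exp 0 by simp]
    exact Real.exp_lt_exp.mpr (by linarith)
  have hat := exp_rel hη₀
  have hJ := Jn_ratio_tendsto ha0 ha1 hat m
  -- ratio of Jn at (n+1)/n, for all n (as composition)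
  have hJ' : Filter.Tendsto (fun n : ℕ => Jn (Real.cosh η₀) m (n+1) / Jn (Real.cosh η₀) m n)
      Filter.atTop (nhds (2 * Real.exp (-η₀))) := by
    have hcomp := hJ.comp (tendsto_sub_atTop_nat 1)
    apply hcomp.congr'
    filter_upwards [Filter.eventually_ge_atTop 1] with n hn
    have h1 : n - 1 + 2 = n + 1 := by omega
    have h2 : n - 1 + 1 = n := by omega
    simp only [Function.comp_apply, h1, h2]
  have hmain := (coef_tendsto m).mul hJ'
  have : (1/2 : ℝ) * (2 * Real.exp (-η₀)) = Real.exp (-η₀) := by ring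
  rw [this] at hmain
  apply hmain.congr'
  filter_upwards [Filter.eventually_ge_atTop 1] with n hn
  exact (qh_succ_div hη₀ m hn).symm

/-- asymptotics of the toroidal Neumann constants. -/
theorem neumann_constants_asymptotics (η₀ : ℝ) (hη₀ : 0 < η₀) (m : ℕ) :
    Filter.Tendsto (fun n : ℕ => rhoT η₀ n m / (n : ℝ))
      Filter.atTop (nhds (1 / 2)) ∧
    Filter.Tendsto (fun n : ℕ => sigmaT η₀ n m / (n : ℝ))
      Filter.atTop (nhds (-Real.cosh η₀)) ∧
    Filter.Tendsto (fun n : ℕ => tauT η₀ n m / (n : ℝ))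
      Filter.atTop (nhds (1 / 2)) := by
  set t : ℝ := Real.cosh η₀ with htdef
  set s₀ : ℝ := Real.sinh η₀ with hsdef
  set a : ℝ := Real.exp (-η₀) with hadef
  have hs₀ : 0 < s₀ := by
    rw [hsdef, Real.sinh_eq]
    have h1 : Real.exp (-η₀) < Real.exp η₀ := Real.exp_lt_exp.mpr (by linarith)
    linarith
  have hta : t - a = s₀ := by
    rw [htdef, hsdef, hadef, Real.cosh_eq, Real.sinh_eq]; ring
  have hinv : Filter.Tendsto (fun n : ℕ => 1 / (n : ℝ)) Filter.atTop (nhds 0) :=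
    tendsto_one_div_atTop_nhds_zero_nat
  have hr := qh_ratio_tendsto hη₀ m
  -- ratio qh n / qh (n-1)
  have hD : Filter.Tendsto (fun n : ℕ => qh η₀ n m / qh η₀ (n-1) m) Filter.atTop (nhds a) := by
    have hcomp := hr.comp (tendsto_sub_atTop_nat 1)
    apply hcomp.congr'
    filter_upwards [Filter.eventually_ge_atTop 1] with n hn
    have h2 : n - 1 + 1 = n := by omega
    simp only [Function.comp_apply, h2]
  have hr2 : Filter.Tendsto (fun n : ℕ => qh η₀ (n+2) m / qh η₀ (n+1) m)
      Filter.atTop (nhds a) := by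
    have hcomp := hr.comp (tendsto_add_atTop_nat 1)
    apply hcomp.congr
    intro n
    simp only [Function.comp_apply]
  refine ⟨?_, ?_, ?_⟩
  -- rho
  · have hE : Filter.Tendsto (fun n : ℕ =>
        (1/(4*s₀)) * ((2 - 1/(n:ℝ)) * t +
          ((2*(m:ℝ)+1) * (1/(n:ℝ)) - 2) * (qh η₀ n m / qh η₀ (n-1) m)))
        Filter.atTop (nhds ((1/(4*s₀)) * ((2 - 0) * t + ((2*(m:ℝ)+1) * 0 - 2) * a))) := by
      exact (((tendsto_const_nhds.sub hinv).mul_const t).add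
        (((hinv.const_mul _).sub_const 2).mul hD)).const_mul _
    have hval : (1/(4*s₀)) * ((2 - 0) * t + ((2*(m:ℝ)+1) * 0 - 2) * a) = 1/2 := by
      field_simp
      linarith
    rw [hval] at hE
    apply hE.congr'
    filter_upwards [Filter.eventually_ge_atTop 2] with n hn
    have hn1 : n ≠ 1 := by omega
    have hn0 : ((n:ℝ)) ≠ 0 := Nat.cast_ne_zero.mpr (by omega)
    have hq0 : qh η₀ (n-1) m ≠ 0 := qh_ne_zero hη₀ m (by omega)
    rw [rhoT, if_neg hn1]
    field_simp
    ring
  -- sigma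
  · have hE : Filter.Tendsto (fun n : ℕ =>
        (-1/(2*s₀)) * ((2*t^2 + 1/(n:ℝ)) +
          ((2*(m:ℝ)-1) * (1/(n:ℝ)) - 2) * (t * (qh η₀ (n+1) m / qh η₀ n m))))
        Filter.atTop (nhds ((-1/(2*s₀)) * ((2*t^2 + 0) +
          ((2*(m:ℝ)-1) * 0 - 2) * (t * a)))) := by
      exact ((tendsto_const_nhds.add hinv).add
        (((hinv.const_mul _).sub_const 2).mul (hr.const_mul t))).const_mul _
    have hval : (-1/(2*s₀)) * ((2*t^2 + 0) + ((2*(m:ℝ)-1) * 0 - 2) * (t * a)) = -t := by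
      have h2 : 2*t^2 - 2*(t*a) = 2*t*s₀ := by linear_combination 2*t*hta
      field_simp
      linarith
    rw [hval] at hE
    apply hE.congr'
    filter_upwards [Filter.eventually_ge_atTop 1] with n hn
    have hn0 : ((n:ℝ)) ≠ 0 := Nat.cast_ne_zero.mpr (by omega)
    have hq0 : qh η₀ n m ≠ 0 := qh_ne_zero hη₀ m (by omega)
    rw [sigmaT]
    field_simp
    ring
  -- tau
  · have hE : Filter.Tendsto (fun n : ℕ =>
        (1/(4*s₀)) * ((2 + 3*(1/(n:ℝ))) * t +
          ((2*(m:ℝ)-3) * (1/(n:ℝ)) - 2) * (qh η₀ (n+2) m / qh η₀ (n+1) m)))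
        Filter.atTop (nhds ((1/(4*s₀)) * ((2 + 3*0) * t + ((2*(m:ℝ)-3) * 0 - 2) * a))) := by
      exact (((tendsto_const_nhds.add (hinv.const_mul 3)).mul_const t).add
        (((hinv.const_mul _).sub_const 2).mul hr2)).const_mul _
    have hval : (1/(4*s₀)) * ((2 + 3*0) * t + ((2*(m:ℝ)-3) * 0 - 2) * a) = 1/2 := by
      field_simp
      linarith
    rw [hval] at hE
    apply hE.congr'
    filter_upwards [Filter.eventually_ge_atTop 1] with n hn
    have hn0 : ((n:ℝ)) ≠ 0 := Nat.cast_ne_zero.mpr (by omega)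
    have hq0 : qh η₀ (n+1) m ≠ 0 := qh_ne_zero hη₀ m (by omega)
    rw [tauT]
    field_simp
    ring
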